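/- The group V̂ is isomorphic to the group presented by three generators λ_0, σ_0, σ_1 subject to the relations λ_1^{-1}λ_2λ_1 = λ_3, λ_1^{-1}λ_3λ_1 = λ_4, σ_0^2 = 1, σ_1^2 = 1, [σ_0,σ_2] = [σ_0,σ_3] = 1, [σ_1,σ_3] = [σ_1,σ_4] = 1, σ_0σ_1σ_0 = σ_1σ_0σ_1, σ_1σ_2σ_1 = σ_2σ_1σ_2, λ_1^{-1}σ_2λ_1 = σ_3, λ_1^{-1}σ_3λ_1 = σ_4, σ_0λ_0 = λ_1σ_0σ_1, σ_1λ_1 = λ_2σ_1σ_2, [σ_0,λ_2] = [σ_0,λ_3] = 1, [σ_1,λ_3] = [σ_1,λ_4] = 1, where in these relations λ_1 abbreviates the word σ_0λ_0σ_1^{-1}σ_0^{-1}, and for i ≥ 2 the symbols λ_i and σ_i abbreviate the words λ_0^{1-i}λ_1λ_0^{i-1} and λ_0^{1-i}σ_1λ_0^{i-1} respectively. Moreover, an isomorphism is given by sending the generators λ_0, σ_0, σ_1 of the finite presentation to the elements λ_0, σ_0, σ_1 of V̂. -/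

import Mathlib

namespace BrinStmt0

/-- The free-group generators for the infinite presentation of `Vhat`:
`Sum.inl i` is the generator `λ_i` and `Sum.inr i` is the generator `σ_i`. -/
def lamF (i : ℕ) : FreeGroup (ℕ ⊕ ℕ) := FreeGroup.of (Sum.inl i)
def sigF (i : ℕ) : FreeGroup (ℕ ⊕ ℕ) := FreeGroup.of (Sum.inr i)

/-- The relators of the infinite presentation of the group `V̂`. -/
def vhatRels : Set (FreeGroup (ℕ ⊕ ℕ)) :=
  { r | (∃ m q : ℕ, m < q ∧ r = lamF q * lamF m * (lamF m * lamF (q+1))⁻¹) ∨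
        (∃ m : ℕ, r = sigF m * sigF m) ∨
        (∃ m n : ℕ, (m + 2 ≤ n ∨ n + 2 ≤ m) ∧
            r = sigF m * sigF n * (sigF n * sigF m)⁻¹) ∨
        (∃ m : ℕ, r = sigF m * sigF (m+1) * sigF m *
            (sigF (m+1) * sigF m * sigF (m+1))⁻¹) ∨
        (∃ m q : ℕ, m < q ∧ r = sigF q * lamF m * (lamF m * sigF (q+1))⁻¹) ∨
        (∃ m : ℕ, r = sigF m * lamF m * (lamF (m+1) * sigF m * sigF (m+1))⁻¹) ∨
        (∃ m : ℕ, r = sigF m * lamF (m+1) * (lamF m * sigF (m+1) * sigF m)⁻¹) ∨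
        (∃ m q : ℕ, q + 1 < m ∧ r = sigF q * lamF m * (lamF m * sigF q)⁻¹) }

/-- The group `V̂`, given by its infinite presentation. -/
abbrev Vhat := PresentedGroup vhatRels

/-- The generator `λ_i` of `V̂`. -/
def lamV (i : ℕ) : Vhat := PresentedGroup.of (Sum.inl i)
/-- The generator `σ_i` of `V̂`. -/
def sigV (i : ℕ) : Vhat := PresentedGroup.of (Sum.inr i)

/-- The element `v_n = λ_0^{n+1} λ_1 λ_0^{-n-2}` of `V̂`. -/
def vV (n : ℕ) : Vhat := lamV 0 ^ (n+1) * lamV 1 * lamV 0 ^ (-((n : ℤ) + 2))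
/-- The element `π_n = λ_0^{n+2} σ_1 λ_0^{-n-2}` of `V̂`. -/
def piV (n : ℕ) : Vhat := lamV 0 ^ (n+2) * sigV 1 * lamV 0 ^ (-((n : ℤ) + 2))
/-- The element `π̄_n = λ_0^{n+1} σ_0 λ_0^{-n-1}` of `V̂`. -/
def opiV (n : ℕ) : Vhat := lamV 0 ^ (n+1) * sigV 0 * lamV 0 ^ (-((n : ℤ) + 1))

/-- The three generators of the finite presentation: `0 ↦ λ_0`, `1 ↦ σ_0`, `2 ↦ σ_1`. -/
def L0 : FreeGroup (Fin 3) := FreeGroup.of 0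
def S0 : FreeGroup (Fin 3) := FreeGroup.of 1
def S1 : FreeGroup (Fin 3) := FreeGroup.of 2

/-- In the finite presentation `λ_1` abbreviates the word `σ_0 λ_0 σ_1⁻¹ σ_0⁻¹`. -/
def L1 : FreeGroup (Fin 3) := S0 * L0 * S1⁻¹ * S0⁻¹

/-- The word `λ_i`: `λ_0` for `i = 0`, and `λ_0^{1-i} λ_1 λ_0^{i-1}` for `i ≥ 1`
(for `i = 1` this is the word `λ_1` itself). -/
def LW : ℕ → FreeGroup (Fin 3)
  | 0 => L0
  | n + 1 => L0 ^ (-(n : ℤ)) * L1 * L0 ^ (n : ℤ)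

/-- The word `σ_i`: `σ_0` for `i = 0`, and `λ_0^{1-i} σ_1 λ_0^{i-1}` for `i ≥ 1`
(for `i = 1` this is `σ_1` itself). -/
def SW : ℕ → FreeGroup (Fin 3)
  | 0 => S0
  | n + 1 => L0 ^ (-(n : ℤ)) * S1 * L0 ^ (n : ℤ)

/-- The commutator `[x,y] = x⁻¹ y⁻¹ x y`. -/
def commW (x y : FreeGroup (Fin 3)) : FreeGroup (Fin 3) := x⁻¹ * y⁻¹ * x * y

/-- The relators of the finite presentation of `V̂` on the generators `λ_0, σ_0, σ_1`. -/
def finVhatRels : Set (FreeGroup (Fin 3)) :=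
  { (LW 1)⁻¹ * LW 2 * LW 1 * (LW 3)⁻¹,
    (LW 1)⁻¹ * LW 3 * LW 1 * (LW 4)⁻¹,
    SW 0 * SW 0,
    SW 1 * SW 1,
    commW (SW 0) (SW 2), commW (SW 0) (SW 3),
    commW (SW 1) (SW 3), commW (SW 1) (SW 4),
    SW 0 * SW 1 * SW 0 * (SW 1 * SW 0 * SW 1)⁻¹,
    SW 1 * SW 2 * SW 1 * (SW 2 * SW 1 * SW 2)⁻¹,
    (LW 1)⁻¹ * SW 2 * LW 1 * (SW 3)⁻¹,
    (LW 1)⁻¹ * SW 3 * LW 1 * (SW 4)⁻¹,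
    SW 0 * LW 0 * (LW 1 * SW 0 * SW 1)⁻¹,
    SW 1 * LW 1 * (LW 2 * SW 1 * SW 2)⁻¹,
    commW (SW 0) (LW 2), commW (SW 0) (LW 3),
    commW (SW 1) (LW 3), commW (SW 1) (LW 4) }

section Cj
variable {H : Type*} [Group H]

def cj (a x : H) : H := a⁻¹ * x * a

lemma cj_mul (a x y : H) : cj a (x * y) = cj a x * cj a y := by unfold cj; group

lemma cj_cj (a b x : H) : cj b (cj a x) = cj (a * b) x := by unfold cj; group

lemma cj_conj (t a x : H) : cj (cj t a) (cj t x) = cj t (cj a x) := by unfold cj; group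

lemma cj_eq_iff (a x y : H) : cj a x = y ↔ x * a = a * y := by
  unfold cj; rw [mul_assoc, inv_mul_eq_iff_eq_mul]

lemma cj_commute (t : H) {a b : H} (h : Commute a b) : Commute (cj t a) (cj t b) := by
  unfold Commute SemiconjBy at *
  unfold cj
  calc t⁻¹ * a * t * (t⁻¹ * b * t) = t⁻¹ * (a * b) * t := by group
    _ = t⁻¹ * (b * a) * t := by rw [h]
    _ = t⁻¹ * b * t * (t⁻¹ * a * t) := by group

lemma rel_one {a b c : H} (h : b * a = a * c) : a⁻¹ * b * a * c⁻¹ = 1 := by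
  rw [mul_inv_eq_one, mul_assoc, h, inv_mul_cancel_left]

lemma rel_of_one {a b c : H} (h : a⁻¹ * b * a * c⁻¹ = 1) : b * a = a * c := by
  rw [mul_inv_eq_one, mul_assoc, inv_mul_eq_iff_eq_mul] at h; exact h

lemma comm_one {a b : H} (h : Commute a b) : a⁻¹ * b⁻¹ * a * b = 1 := by
  rw [show a⁻¹ * b⁻¹ * a * b = a⁻¹ * b⁻¹ * (a * b) from by group, h.eq]; group

lemma comm_of_one {a b : H} (h : a⁻¹ * b⁻¹ * a * b = 1) : Commute a b := by
  have h1 : a⁻¹ * b⁻¹ * a = b⁻¹ := mul_eq_one_iff_eq_inv.mp h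
  rw [mul_assoc, inv_mul_eq_iff_eq_mul] at h1
  have h3 : Commute b⁻¹ a := h1
  simpa using h3.symm.inv_right

end Cj

/-! ### The V̂ side -/

def mkV : FreeGroup (ℕ ⊕ ℕ) →* Vhat := PresentedGroup.mk vhatRels

lemma mkV_rel {r : FreeGroup (ℕ ⊕ ℕ)} (h : r ∈ vhatRels) : mkV r = 1 :=
  (QuotientGroup.eq_one_iff r).2 (Subgroup.subset_normalClosure h)

lemma Va (m q : ℕ) (h : m < q) : lamV q * lamV m = lamV m * lamV (q+1) := by
  have h1 := mkV_rel (show _ ∈ vhatRels from Or.inl ⟨m, q, h, rfl⟩)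
  simp only [map_mul, map_inv] at h1
  rw [mul_inv_eq_one] at h1
  exact h1

lemma Vb (m : ℕ) : sigV m * sigV m = 1 := by
  have h1 := mkV_rel (show _ ∈ vhatRels from Or.inr (Or.inl ⟨m, rfl⟩))
  rw [map_mul] at h1
  exact h1

lemma Vc (m n : ℕ) (h : m + 2 ≤ n ∨ n + 2 ≤ m) : sigV m * sigV n = sigV n * sigV m := by
  have h1 := mkV_rel (show _ ∈ vhatRels from Or.inr (Or.inr (Or.inl ⟨m, n, h, rfl⟩)))
  simp only [map_mul, map_inv] at h1
  rw [mul_inv_eq_one] at h1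
  exact h1

lemma Vd (m : ℕ) :
    sigV m * sigV (m+1) * sigV m = sigV (m+1) * sigV m * sigV (m+1) := by
  have h1 := mkV_rel (show _ ∈ vhatRels from Or.inr (Or.inr (Or.inr (Or.inl ⟨m, rfl⟩))))
  simp only [map_mul, map_inv] at h1
  rw [mul_inv_eq_one] at h1
  exact h1

lemma Ve (m q : ℕ) (h : m < q) : sigV q * lamV m = lamV m * sigV (q+1) := by
  have h1 := mkV_rel (show _ ∈ vhatRels from
    Or.inr (Or.inr (Or.inr (Or.inr (Or.inl ⟨m, q, h, rfl⟩)))))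
  simp only [map_mul, map_inv] at h1
  rw [mul_inv_eq_one] at h1
  exact h1

lemma Vf (m : ℕ) : sigV m * lamV m = lamV (m+1) * sigV m * sigV (m+1) := by
  have h1 := mkV_rel (show _ ∈ vhatRels from
    Or.inr (Or.inr (Or.inr (Or.inr (Or.inr (Or.inl ⟨m, rfl⟩))))))
  simp only [map_mul, map_inv] at h1
  rw [mul_inv_eq_one] at h1
  exact h1

lemma Vg (m : ℕ) : sigV m * lamV (m+1) = lamV m * sigV (m+1) * sigV m := by
  have h1 := mkV_rel (show _ ∈ vhatRels from
    Or.inr (Or.inr (Or.inr (Or.inr (Or.inr (Or.inr (Or.inl ⟨m, rfl⟩)))))))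
  simp only [map_mul, map_inv] at h1
  rw [mul_inv_eq_one] at h1
  exact h1

lemma Vh (m q : ℕ) (h : q + 1 < m) : sigV q * lamV m = lamV m * sigV q := by
  have h1 := mkV_rel (show _ ∈ vhatRels from
    Or.inr (Or.inr (Or.inr (Or.inr (Or.inr (Or.inr (Or.inr ⟨m, q, h, rfl⟩)))))))
  simp only [map_mul, map_inv] at h1
  rw [mul_inv_eq_one] at h1
  exact h1

lemma V_cL (q : ℕ) (h : 1 ≤ q) : cj (lamV 0) (lamV q) = lamV (q+1) :=
  (cj_eq_iff _ _ _).2 (Va 0 q h)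

lemma V_cS (q : ℕ) (h : 1 ≤ q) : cj (lamV 0) (sigV q) = sigV (q+1) :=
  (cj_eq_iff _ _ _).2 (Ve 0 q h)

/-- The map from the free group on three generators into `Vhat`. -/
def liftV : FreeGroup (Fin 3) →* Vhat := FreeGroup.lift ![lamV 0, sigV 0, sigV 1]

@[simp] lemma liftV_L0 : liftV L0 = lamV 0 := by simp [liftV, L0]
@[simp] lemma liftV_S0 : liftV S0 = sigV 0 := by simp [liftV, S0]
@[simp] lemma liftV_S1 : liftV S1 = sigV 1 := by simp [liftV, S1]

lemma liftV_L1 : liftV L1 = lamV 1 := by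
  have h : liftV L1 = sigV 0 * lamV 0 * (sigV 1)⁻¹ * (sigV 0)⁻¹ := by
    simp [L1, map_mul, map_inv]
  rw [h, Vf 0]; group

lemma V_zpowL (n : ℕ) :
    (lamV 0) ^ (-(n:ℤ)) * lamV 1 * (lamV 0) ^ (n:ℤ) = lamV (n+1) := by
  induction n with
  | zero => simp
  | succ k ih =>
    have h1 : (lamV 0) ^ (-((k:ℤ)+1)) * lamV 1 * (lamV 0) ^ ((k:ℤ)+1)
        = cj (lamV 0) ((lamV 0) ^ (-(k:ℤ)) * lamV 1 * (lamV 0) ^ (k:ℤ)) := by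
      unfold cj; group
    push_cast
    rw [h1, ih, V_cL (k+1) (by omega)]

lemma V_zpowS (n : ℕ) :
    (lamV 0) ^ (-(n:ℤ)) * sigV 1 * (lamV 0) ^ (n:ℤ) = sigV (n+1) := by
  induction n with
  | zero => simp
  | succ k ih =>
    have h1 : (lamV 0) ^ (-((k:ℤ)+1)) * sigV 1 * (lamV 0) ^ ((k:ℤ)+1)
        = cj (lamV 0) ((lamV 0) ^ (-(k:ℤ)) * sigV 1 * (lamV 0) ^ (k:ℤ)) := by
      unfold cj; group
    push_cast
    rw [h1, ih, V_cS (k+1) (by omega)]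

lemma liftV_LW (n : ℕ) : liftV (LW n) = lamV n := by
  cases n with
  | zero => simp [LW]
  | succ k =>
    rw [show LW (k+1) = L0 ^ (-(k:ℤ)) * L1 * L0 ^ (k:ℤ) from rfl]
    rw [map_mul, map_mul, map_zpow, map_zpow, liftV_L0, liftV_L1]
    exact V_zpowL k

lemma liftV_SW (n : ℕ) : liftV (SW n) = sigV n := by
  cases n with
  | zero => simp [SW]
  | succ k =>
    rw [show SW (k+1) = L0 ^ (-(k:ℤ)) * S1 * L0 ^ (k:ℤ) from rfl]
    rw [map_mul, map_mul, map_zpow, map_zpow, liftV_L0, liftV_S1]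
    exact V_zpowS k

/-! ### The finitely presented side -/

def mkG : FreeGroup (Fin 3) →* PresentedGroup finVhatRels := PresentedGroup.mk finVhatRels

lemma mkG_rel {r : FreeGroup (Fin 3)} (h : r ∈ finVhatRels) : mkG r = 1 :=
  (QuotientGroup.eq_one_iff r).2 (Subgroup.subset_normalClosure h)

/-- The image of the word `λ_n` in the finitely presented group. -/
def LG (n : ℕ) : PresentedGroup finVhatRels := mkG (LW n)
/-- The image of the word `σ_n` in the finitely presented group. -/
def SG (n : ℕ) : PresentedGroup finVhatRels := mkG (SW n)

lemma gR1 : LG 2 * LG 1 = LG 1 * LG 3 := by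
  have h := mkG_rel (show (LW 1)⁻¹ * LW 2 * LW 1 * (LW 3)⁻¹ ∈ finVhatRels by
    simp [finVhatRels])
  simp only [map_mul, map_inv] at h
  exact rel_of_one h

lemma gR2 : LG 3 * LG 1 = LG 1 * LG 4 := by
  have h := mkG_rel (show (LW 1)⁻¹ * LW 3 * LW 1 * (LW 4)⁻¹ ∈ finVhatRels by
    simp [finVhatRels])
  simp only [map_mul, map_inv] at h
  exact rel_of_one h

lemma gB0 : SG 0 * SG 0 = 1 := by
  have h := mkG_rel (show SW 0 * SW 0 ∈ finVhatRels by simp [finVhatRels])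
  simp only [map_mul] at h
  exact h

lemma gB1 : SG 1 * SG 1 = 1 := by
  have h := mkG_rel (show SW 1 * SW 1 ∈ finVhatRels by simp [finVhatRels])
  simp only [map_mul] at h
  exact h

lemma gC02 : Commute (SG 0) (SG 2) := by
  have h := mkG_rel (show commW (SW 0) (SW 2) ∈ finVhatRels by simp [finVhatRels])
  simp only [commW, map_mul, map_inv] at h
  exact comm_of_one h

lemma gC03 : Commute (SG 0) (SG 3) := by
  have h := mkG_rel (show commW (SW 0) (SW 3) ∈ finVhatRels by simp [finVhatRels])
  simp only [commW, map_mul, map_inv] at h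
  exact comm_of_one h

lemma gC13 : Commute (SG 1) (SG 3) := by
  have h := mkG_rel (show commW (SW 1) (SW 3) ∈ finVhatRels by simp [finVhatRels])
  simp only [commW, map_mul, map_inv] at h
  exact comm_of_one h

lemma gC14 : Commute (SG 1) (SG 4) := by
  have h := mkG_rel (show commW (SW 1) (SW 4) ∈ finVhatRels by simp [finVhatRels])
  simp only [commW, map_mul, map_inv] at h
  exact comm_of_one h

lemma gD0 : SG 0 * SG 1 * SG 0 = SG 1 * SG 0 * SG 1 := by
  have h := mkG_rel (show SW 0 * SW 1 * SW 0 * (SW 1 * SW 0 * SW 1)⁻¹ ∈ finVhatRels by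
    simp [finVhatRels])
  simp only [map_mul, map_inv] at h
  rw [mul_inv_eq_one] at h
  exact h

lemma gD1 : SG 1 * SG 2 * SG 1 = SG 2 * SG 1 * SG 2 := by
  have h := mkG_rel (show SW 1 * SW 2 * SW 1 * (SW 2 * SW 1 * SW 2)⁻¹ ∈ finVhatRels by
    simp [finVhatRels])
  simp only [map_mul, map_inv] at h
  rw [mul_inv_eq_one] at h
  exact h

lemma gE12 : SG 2 * LG 1 = LG 1 * SG 3 := by
  have h := mkG_rel (show (LW 1)⁻¹ * SW 2 * LW 1 * (SW 3)⁻¹ ∈ finVhatRels by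
    simp [finVhatRels])
  simp only [map_mul, map_inv] at h
  exact rel_of_one h

lemma gE13 : SG 3 * LG 1 = LG 1 * SG 4 := by
  have h := mkG_rel (show (LW 1)⁻¹ * SW 3 * LW 1 * (SW 4)⁻¹ ∈ finVhatRels by
    simp [finVhatRels])
  simp only [map_mul, map_inv] at h
  exact rel_of_one h

lemma gF0 : SG 0 * LG 0 = LG 1 * SG 0 * SG 1 := by
  have h := mkG_rel (show SW 0 * LW 0 * (LW 1 * SW 0 * SW 1)⁻¹ ∈ finVhatRels by
    simp [finVhatRels])
  simp only [map_mul, map_inv] at h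
  rw [mul_inv_eq_one] at h
  exact h

lemma gF1 : SG 1 * LG 1 = LG 2 * SG 1 * SG 2 := by
  have h := mkG_rel (show SW 1 * LW 1 * (LW 2 * SW 1 * SW 2)⁻¹ ∈ finVhatRels by
    simp [finVhatRels])
  simp only [map_mul, map_inv] at h
  rw [mul_inv_eq_one] at h
  exact h

lemma gH02 : Commute (SG 0) (LG 2) := by
  have h := mkG_rel (show commW (SW 0) (LW 2) ∈ finVhatRels by simp [finVhatRels])
  simp only [commW, map_mul, map_inv] at h
  exact comm_of_one h

lemma gH03 : Commute (SG 0) (LG 3) := by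
  have h := mkG_rel (show commW (SW 0) (LW 3) ∈ finVhatRels by simp [finVhatRels])
  simp only [commW, map_mul, map_inv] at h
  exact comm_of_one h

lemma gH13 : Commute (SG 1) (LG 3) := by
  have h := mkG_rel (show commW (SW 1) (LW 3) ∈ finVhatRels by simp [finVhatRels])
  simp only [commW, map_mul, map_inv] at h
  exact comm_of_one h

lemma gH14 : Commute (SG 1) (LG 4) := by
  have h := mkG_rel (show commW (SW 1) (LW 4) ∈ finVhatRels by simp [finVhatRels])
  simp only [commW, map_mul, map_inv] at h
  exact comm_of_one h

lemma LG_succ (k : ℕ) : LG (k+1) = (LG 0) ^ (-(k:ℤ)) * LG 1 * (LG 0) ^ (k:ℤ) := by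
  simp only [LG, LW, ← map_zpow, ← map_mul]
  congr 1

lemma SG_succ (k : ℕ) : SG (k+1) = (LG 0) ^ (-(k:ℤ)) * SG 1 * (LG 0) ^ (k:ℤ) := by
  simp only [SG, LG, SW, LW, ← map_zpow, ← map_mul]
  congr 1

lemma cjlL (k : ℕ) : cj (LG 0) (LG (k+1)) = LG (k+2) := by
  rw [LG_succ k, LG_succ (k+1)]
  unfold cj
  push_cast
  group

lemma cjlS (k : ℕ) : cj (LG 0) (SG (k+1)) = SG (k+2) := by
  rw [SG_succ k, SG_succ (k+1)]
  unfold cj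
  push_cast
  group

/-- Family (a): `λ_q λ_m = λ_m λ_{q+1}` for `m < q`, as a conjugation statement. -/
lemma gA : ∀ q m : ℕ, m < q → cj (LG m) (LG q) = LG (q+1) := by
  intro q
  induction q using Nat.strong_induction_on with
  | _ q IH =>
    have h2 : ∀ m, 2 ≤ m → m < q → cj (LG m) (LG q) = LG (q+1) := by
      intro m hm2 hmq
      obtain ⟨m0, rfl⟩ : ∃ m0, m = m0 + 2 := ⟨m - 2, by omega⟩
      obtain ⟨q1, rfl⟩ : ∃ q1, q = q1 + 2 := ⟨q - 2, by omega⟩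
      have ih : cj (LG (m0+1)) (LG (q1+1)) = LG (q1+2) :=
        IH (q1+1) (by omega) (m0+1) (by omega)
      calc cj (LG (m0+2)) (LG (q1+2))
          = cj (cj (LG 0) (LG (m0+1))) (cj (LG 0) (LG (q1+1))) := by
            rw [cjlL m0, cjlL q1]
        _ = cj (LG 0) (cj (LG (m0+1)) (LG (q1+1))) := cj_conj _ _ _
        _ = cj (LG 0) (LG (q1+2)) := by rw [ih]
        _ = LG (q1+3) := cjlL (q1+1)
    intro m hmq
    match m, hmq with
    | 0, hmq =>
      obtain ⟨q0, rfl⟩ : ∃ q0, q = q0 + 1 := ⟨q - 1, by omega⟩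
      exact cjlL q0
    | 1, hmq =>
      match q, hmq, h2, IH with
      | 2, _, _, _ => exact (cj_eq_iff _ _ _).2 gR1
      | 3, _, _, _ => exact (cj_eq_iff _ _ _).2 gR2
      | (k+4), _, h2, IH =>
        have hA : cj (LG 2) (LG (k+3)) = LG (k+4) :=
          IH (k+3) (by omega) 2 (by omega)
        have hB : cj (LG 1) (LG (k+3)) = LG (k+4) :=
          IH (k+3) (by omega) 1 (by omega)
        have hC : cj (LG 3) (LG (k+4)) = LG (k+5) := h2 3 (by omega) (by omega)
        calc cj (LG 1) (LG (k+4))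
            = cj (LG 1) (cj (LG 2) (LG (k+3))) := by rw [hA]
          _ = cj (LG 2 * LG 1) (LG (k+3)) := cj_cj _ _ _
          _ = cj (LG 1 * LG 3) (LG (k+3)) := by rw [gR1]
          _ = cj (LG 3) (cj (LG 1) (LG (k+3))) := (cj_cj _ _ _).symm
          _ = cj (LG 3) (LG (k+4)) := by rw [hB]
          _ = LG (k+5) := hC
    | (m0+2), hmq => exact h2 (m0+2) (by omega) hmq

/-- Family (e): `σ_q λ_m = λ_m σ_{q+1}` for `m < q`, as a conjugation statement. -/
lemma gE : ∀ q m : ℕ, m < q → cj (LG m) (SG q) = SG (q+1) := by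
  intro q
  induction q using Nat.strong_induction_on with
  | _ q IH =>
    have h2 : ∀ m, 2 ≤ m → m < q → cj (LG m) (SG q) = SG (q+1) := by
      intro m hm2 hmq
      obtain ⟨m0, rfl⟩ : ∃ m0, m = m0 + 2 := ⟨m - 2, by omega⟩
      obtain ⟨q1, rfl⟩ : ∃ q1, q = q1 + 2 := ⟨q - 2, by omega⟩
      have ih : cj (LG (m0+1)) (SG (q1+1)) = SG (q1+2) :=
        IH (q1+1) (by omega) (m0+1) (by omega)
      calc cj (LG (m0+2)) (SG (q1+2))
          = cj (cj (LG 0) (LG (m0+1))) (cj (LG 0) (SG (q1+1))) := by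
            rw [cjlL m0, cjlS q1]
        _ = cj (LG 0) (cj (LG (m0+1)) (SG (q1+1))) := cj_conj _ _ _
        _ = cj (LG 0) (SG (q1+2)) := by rw [ih]
        _ = SG (q1+3) := cjlS (q1+1)
    intro m hmq
    match m, hmq with
    | 0, hmq =>
      obtain ⟨q0, rfl⟩ : ∃ q0, q = q0 + 1 := ⟨q - 1, by omega⟩
      exact cjlS q0
    | 1, hmq =>
      match q, hmq, h2, IH with
      | 2, _, _, _ => exact (cj_eq_iff _ _ _).2 gE12
      | 3, _, _, _ => exact (cj_eq_iff _ _ _).2 gE13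
      | (k+4), _, h2, IH =>
        have hA : cj (LG 2) (SG (k+3)) = SG (k+4) :=
          IH (k+3) (by omega) 2 (by omega)
        have hB : cj (LG 1) (SG (k+3)) = SG (k+4) :=
          IH (k+3) (by omega) 1 (by omega)
        have hC : cj (LG 3) (SG (k+4)) = SG (k+5) := h2 3 (by omega) (by omega)
        calc cj (LG 1) (SG (k+4))
            = cj (LG 1) (cj (LG 2) (SG (k+3))) := by rw [hA]
          _ = cj (LG 2 * LG 1) (SG (k+3)) := cj_cj _ _ _
          _ = cj (LG 1 * LG 3) (SG (k+3)) := by rw [gR1]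
          _ = cj (LG 3) (cj (LG 1) (SG (k+3))) := (cj_cj _ _ _).symm
          _ = cj (LG 3) (SG (k+4)) := by rw [hB]
          _ = SG (k+5) := hC
    | (m0+2), hmq => exact h2 (m0+2) (by omega) hmq

/-- Family (b): `σ_m² = 1`. -/
lemma gB : ∀ m : ℕ, SG m * SG m = 1
  | 0 => gB0
  | 1 => gB1
  | (n+2) => by
    have ih := gB (n+1)
    have h := congrArg (cj (LG 0)) ih
    rw [cj_mul, cjlS n] at h
    rw [show cj (LG 0) (1 : PresentedGroup finVhatRels) = 1 from by unfold cj; group] at h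
    exact h

/-- Family (h), base `q = 0`. -/
lemma gH0 : ∀ m, 2 ≤ m → Commute (SG 0) (LG m)
  | 0, h => absurd h (by omega)
  | 1, h => absurd h (by omega)
  | 2, _ => gH02
  | 3, _ => gH03
  | (k+4), _ => by
    have ih := gH0 (k+3) (by omega)
    rw [show LG (k+4) = cj (LG 2) (LG (k+3)) from (gA (k+3) 2 (by omega)).symm]
    unfold cj
    exact (gH02.inv_right.mul_right ih).mul_right gH02

/-- Family (h), base `q = 1`. -/
lemma gH1 : ∀ m, 3 ≤ m → Commute (SG 1) (LG m)
  | 0, h => absurd h (by omega)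
  | 1, h => absurd h (by omega)
  | 2, h => absurd h (by omega)
  | 3, _ => gH13
  | 4, _ => gH14
  | (k+5), _ => by
    have ih := gH1 (k+4) (by omega)
    rw [show LG (k+5) = cj (LG 3) (LG (k+4)) from (gA (k+4) 3 (by omega)).symm]
    unfold cj
    exact (gH13.inv_right.mul_right ih).mul_right gH13

/-- Family (h): `σ_q λ_m = λ_m σ_q` for `m > q + 1`. -/
lemma gH : ∀ q m, q + 1 < m → Commute (SG q) (LG m)
  | 0, m, h => gH0 m (by omega)
  | 1, m, h => gH1 m (by omega)
  | (q+2), m, h => by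
    obtain ⟨m0, rfl⟩ : ∃ m0, m = m0 + 2 := ⟨m - 2, by omega⟩
    have ih := gH (q+1) (m0+1) (by omega)
    have h2 := cj_commute (LG 0) ih
    rwa [cjlS q, cjlL m0] at h2

/-- Family (c), base `m = 0`. -/
lemma gC0 : ∀ n, 2 ≤ n → Commute (SG 0) (SG n)
  | 0, h => absurd h (by omega)
  | 1, h => absurd h (by omega)
  | 2, _ => gC02
  | 3, _ => gC03
  | (k+4), _ => by
    have ih := gC0 (k+3) (by omega)
    rw [show SG (k+4) = cj (LG 2) (SG (k+3)) from (gE (k+3) 2 (by omega)).symm]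
    unfold cj
    exact (gH02.inv_right.mul_right ih).mul_right gH02

/-- Family (c), base `m = 1`. -/
lemma gC1 : ∀ n, 3 ≤ n → Commute (SG 1) (SG n)
  | 0, h => absurd h (by omega)
  | 1, h => absurd h (by omega)
  | 2, h => absurd h (by omega)
  | 3, _ => gC13
  | 4, _ => gC14
  | (k+5), _ => by
    have ih := gC1 (k+4) (by omega)
    rw [show SG (k+5) = cj (LG 3) (SG (k+4)) from (gE (k+4) 3 (by omega)).symm]
    unfold cj
    exact (gH13.inv_right.mul_right ih).mul_right gH13

/-- Family (c): far-apart `σ`'s commute. -/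
lemma gC : ∀ m n, m + 2 ≤ n → Commute (SG m) (SG n)
  | 0, n, h => gC0 n (by omega)
  | 1, n, h => gC1 n (by omega)
  | (m+2), n, h => by
    obtain ⟨n0, rfl⟩ : ∃ n0, n = n0 + 2 := ⟨n - 2, by omega⟩
    have ih := gC (m+1) (n0+1) (by omega)
    have h2 := cj_commute (LG 0) ih
    rwa [cjlS m, cjlS n0] at h2

/-- Family (d): the braid relations. -/
lemma gD : ∀ m, SG m * SG (m+1) * SG m = SG (m+1) * SG m * SG (m+1)
  | 0 => gD0
  | 1 => gD1
  | (m+2) => by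
    have ih := gD (m+1)
    have h := congrArg (cj (LG 0)) ih
    rw [cj_mul, cj_mul, cj_mul, cj_mul, cjlS m, cjlS (m+1)] at h
    exact h

/-- Family (f): `σ_m λ_m = λ_{m+1} σ_m σ_{m+1}`. -/
lemma gF : ∀ m, SG m * LG m = LG (m+1) * SG m * SG (m+1)
  | 0 => gF0
  | 1 => gF1
  | (m+2) => by
    have ih := gF (m+1)
    have h := congrArg (cj (LG 0)) ih
    rw [cj_mul, cj_mul, cj_mul, cjlS m, cjlS (m+1), cjlL m, cjlL (m+1)] at h
    exact h

/-- Family (g): `σ_m λ_{m+1} = λ_m σ_{m+1} σ_m`. -/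
lemma gG (m : ℕ) : SG m * LG (m+1) = LG m * SG (m+1) * SG m := by
  have hL : LG (m+1) = SG m * LG m * (SG (m+1))⁻¹ * (SG m)⁻¹ := by
    rw [gF m]; group
  have hsm : (SG m)⁻¹ = SG m := inv_eq_of_mul_eq_one_right (gB m)
  have hsm1 : (SG (m+1))⁻¹ = SG (m+1) := inv_eq_of_mul_eq_one_right (gB (m+1))
  rw [hL, hsm, hsm1,
    show SG m * (SG m * LG m * SG (m+1) * SG m)
        = SG m * SG m * (LG m * SG (m+1) * SG m) from by group,
    gB m, one_mul]

/-! ### The two homomorphisms -/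

lemma gA' (q m : ℕ) (h : m < q) : LG q * LG m = LG m * LG (q+1) :=
  (cj_eq_iff _ _ _).1 (gA q m h)

lemma gE' (q m : ℕ) (h : m < q) : SG q * LG m = LG m * SG (q+1) :=
  (cj_eq_iff _ _ _).1 (gE q m h)

/-- The map from the free group on `ℕ ⊕ ℕ` into the finitely presented group. -/
def liftG : FreeGroup (ℕ ⊕ ℕ) →* PresentedGroup finVhatRels :=
  FreeGroup.lift (Sum.elim LG SG)

@[simp] lemma liftG_lamF (i : ℕ) : liftG (lamF i) = LG i := by simp [liftG, lamF]
@[simp] lemma liftG_sigF (i : ℕ) : liftG (sigF i) = SG i := by simp [liftG, sigF]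

lemma hψ : ∀ r ∈ vhatRels, FreeGroup.lift (Sum.elim LG SG) r = 1 := by
  intro r hr
  simp only [vhatRels, Set.mem_setOf_eq] at hr
  show liftG r = 1
  rcases hr with ⟨m,q,hlt,rfl⟩ | ⟨m,rfl⟩ | ⟨m,n,hc,rfl⟩ | ⟨m,rfl⟩ | ⟨m,q,hlt,rfl⟩ |
    ⟨m,rfl⟩ | ⟨m,rfl⟩ | ⟨m,q,hlt,rfl⟩ <;>
    simp only [map_mul, map_inv, liftG_lamF, liftG_sigF]
  · exact mul_inv_eq_one.mpr (gA' q m hlt)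
  · exact gB m
  · refine mul_inv_eq_one.mpr ?_
    rcases hc with h | h
    · exact (gC m n h).eq
    · exact (gC n m h).eq.symm
  · exact mul_inv_eq_one.mpr (gD m)
  · exact mul_inv_eq_one.mpr (gE' q m hlt)
  · exact mul_inv_eq_one.mpr (gF m)
  · exact mul_inv_eq_one.mpr (gG m)
  · exact mul_inv_eq_one.mpr (gH q m hlt).eq

/-- The homomorphism from `V̂` to the finitely presented group. -/
def ψ : Vhat →* PresentedGroup finVhatRels := PresentedGroup.toGroup hψ

lemma hφ : ∀ r ∈ finVhatRels, FreeGroup.lift ![lamV 0, sigV 0, sigV 1] r = 1 := by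
  intro r hr
  simp only [finVhatRels, Set.mem_insert_iff, Set.mem_singleton_iff] at hr
  show liftV r = 1
  rcases hr with rfl|rfl|rfl|rfl|rfl|rfl|rfl|rfl|rfl|rfl|rfl|rfl|rfl|rfl|rfl|rfl|rfl|rfl <;>
    simp only [commW, map_mul, map_inv, liftV_LW, liftV_SW]
  · exact rel_one (Va 1 2 (by omega))
  · exact rel_one (Va 1 3 (by omega))
  · exact Vb 0
  · exact Vb 1
  · exact comm_one (Vc 0 2 (by omega))
  · exact comm_one (Vc 0 3 (by omega))
  · exact comm_one (Vc 1 3 (by omega))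
  · exact comm_one (Vc 1 4 (by omega))
  · exact mul_inv_eq_one.mpr (Vd 0)
  · exact mul_inv_eq_one.mpr (Vd 1)
  · exact rel_one (Ve 1 2 (by omega))
  · exact rel_one (Ve 1 3 (by omega))
  · exact mul_inv_eq_one.mpr (Vf 0)
  · exact mul_inv_eq_one.mpr (Vf 1)
  · exact comm_one (Vh 2 0 (by omega))
  · exact comm_one (Vh 3 0 (by omega))
  · exact comm_one (Vh 3 1 (by omega))
  · exact comm_one (Vh 4 1 (by omega))

/-- The homomorphism from the finitely presented group to `V̂`. -/
def φ : PresentedGroup finVhatRels →* Vhat := PresentedGroup.toGroup hφ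

lemma φ_mkG (w : FreeGroup (Fin 3)) : φ (mkG w) = liftV w := by
  have key : φ.comp mkG = (liftV : FreeGroup (Fin 3) →* Vhat) := by
    apply FreeGroup.ext_hom
    intro a
    show PresentedGroup.toGroup hφ (PresentedGroup.of a) = liftV (FreeGroup.of a)
    rw [PresentedGroup.toGroup.of]
    simp [liftV]
  exact congrArg (fun f => f w) (congrArg DFunLike.coe key)

lemma φ_of0 : φ (PresentedGroup.of 0) = lamV 0 := by
  rw [show (PresentedGroup.of 0 : PresentedGroup finVhatRels) = mkG L0 from rfl, φ_mkG]
  exact liftV_L0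

lemma φ_of1 : φ (PresentedGroup.of 1) = sigV 0 := by
  rw [show (PresentedGroup.of 1 : PresentedGroup finVhatRels) = mkG S0 from rfl, φ_mkG]
  exact liftV_S0

lemma φ_of2 : φ (PresentedGroup.of 2) = sigV 1 := by
  rw [show (PresentedGroup.of 2 : PresentedGroup finVhatRels) = mkG S1 from rfl, φ_mkG]
  exact liftV_S1

lemma ψ_lamV (i : ℕ) : ψ (lamV i) = LG i := by
  rw [show lamV i = PresentedGroup.of (Sum.inl i) from rfl]
  exact PresentedGroup.toGroup.of hψ

lemma ψ_sigV (i : ℕ) : ψ (sigV i) = SG i := by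
  rw [show sigV i = PresentedGroup.of (Sum.inr i) from rfl]
  exact PresentedGroup.toGroup.of hψ

lemma hcomp1 : ψ.comp φ = MonoidHom.id (PresentedGroup finVhatRels) := by
  apply PresentedGroup.ext
  intro x
  fin_cases x
  · show ψ (φ (PresentedGroup.of 0)) = PresentedGroup.of 0
    rw [φ_of0, ψ_lamV]
    rfl
  · show ψ (φ (PresentedGroup.of 1)) = PresentedGroup.of 1
    rw [φ_of1, ψ_sigV]
    rfl
  · show ψ (φ (PresentedGroup.of 2)) = PresentedGroup.of 2
    rw [φ_of2, ψ_sigV]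
    show mkG (SW 1) = mkG S1
    simp [SW]

lemma hcomp2 : φ.comp ψ = MonoidHom.id Vhat := by
  apply PresentedGroup.ext
  intro x
  rcases x with i | i
  · show φ (ψ (lamV i)) = lamV i
    rw [ψ_lamV]
    show φ (mkG (LW i)) = lamV i
    rw [φ_mkG]
    exact liftV_LW i
  · show φ (ψ (sigV i)) = sigV i
    rw [ψ_sigV]
    show φ (mkG (SW i)) = sigV i
    rw [φ_mkG]
    exact liftV_SW i

/-- Lemma: `V̂` is isomorphic to the finitely presented group above, via an
isomorphism sending the generators `λ_0, σ_0, σ_1` of the finite presentation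
to the elements `λ_0, σ_0, σ_1` of `V̂`. -/
theorem Vhat_finitely_presented :
    ∃ e : PresentedGroup finVhatRels ≃* Vhat,
      e (PresentedGroup.of 0) = lamV 0 ∧
      e (PresentedGroup.of 1) = sigV 0 ∧
      e (PresentedGroup.of 2) = sigV 1 := by
  refine ⟨MonoidHom.toMulEquiv φ ψ hcomp1 hcomp2, ?_, ?_, ?_⟩
  · exact φ_of0
  · exact φ_of1
  · exact φ_of2

end BrinStmt0
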